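/- arXiv:2310.10183 — 3 statements merged into one kernel-verified Lean document; each statement's English description precedes it below -/
import Mathlib

section
/- Let x, y be real numbers with x ≥ y > 0, let t be a positive integer, and let a₀, a₁, …, a_t be real numbers each at least 2 with a₀ ≤ max_{1≤i≤t} a_i. Then (x + a₀ - 2 + t) / (y + (∑_{i=1}^t a_i) - t) ≤ x / y. -/
theorem stmt0 (x y : ℝ) (t : ℕ) (ht : 1 ≤ t) (a : ℕ → ℝ)
    (hxy : y ≤ x) (hy : 0 < y)
    (h2 : ∀ i ≤ t, 2 ≤ a i)
    (hmax : a 0 ≤ (Finset.Icc 1 t).sup' (Finset.nonempty_Icc.mpr ht) a) :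
    (x + a 0 - 2 + t) / (y + (∑ i ∈ Finset.Icc 1 t, a i) - t) ≤ x / y := by
  set S := ∑ i ∈ Finset.Icc 1 t, a i with hS
  obtain ⟨j, hj, hje⟩ := Finset.exists_mem_eq_sup' (Finset.nonempty_Icc.mpr ht) a
  have hcard : (Finset.Icc 1 t).card = t := by simp [Nat.card_Icc]
  have hrest : 2 * ((t : ℝ) - 1) ≤ ∑ i ∈ (Finset.Icc 1 t).erase j, a i := by
    have := Finset.sum_le_sum (f := fun _ : ℕ => (2:ℝ)) (g := a)
      (s := (Finset.Icc 1 t).erase j) (fun i hi => by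
        have := Finset.mem_of_mem_erase hi
        exact h2 i (Finset.mem_Icc.mp this).2)
    have hc : ((Finset.Icc 1 t).erase j).card = t - 1 := by
      rw [Finset.card_erase_of_mem hj, hcard]
    simpa [hc, Nat.cast_sub ht, mul_comm] using this
  have hSge : a 0 + 2 * ((t:ℝ) - 1) ≤ S := by
    have hsum : a j + ∑ i ∈ (Finset.Icc 1 t).erase j, a i = S := by
      rw [hS, Finset.add_sum_erase _ a hj]
    have ha0j : a 0 ≤ a j := by rw [hje] at hmax; exact hmax
    linarith
  have hden : 0 < y + S - t := by
    have : 2 * (t:ℝ) ≤ S := by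
      have h2j : 2 ≤ a j := h2 j (Finset.mem_Icc.mp hj).2
      have h20 : 2 ≤ a 0 := h2 0 (Nat.zero_le t)
      linarith
    have ht1 : (1:ℝ) ≤ t := by exact_mod_cast ht
    linarith
  rw [div_le_div_iff₀ hden hy]
  have h20 : 2 ≤ a 0 := h2 0 (Nat.zero_le t)
  have ht1 : (1:ℝ) ≤ t := by exact_mod_cast ht
  nlinarith [mul_le_mul_of_nonneg_right hxy (by linarith : (0:ℝ) ≤ a 0 - 2 + t),
    mul_le_mul_of_nonneg_left hSge (le_of_lt (lt_of_lt_of_le hy hxy))]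
end

section
/- For disjoint vertex subsets A, B of a finite simple graph G, the quantity δ(A,B) = 2|A| − 2|B| + ∑_{v∈B} d_{G−A}(v) − o(A,B) is even, where o(A,B) counts the components H of G − (A ∪ B) for which the number of edges between H and B is odd. -/
open SimpleGraph

variable {V : Type*}

/-- The number of (ordered) pairs giving edges between `X` and `Y`;
for disjoint `X`, `Y` this is the number of edges between `X` and `Y`. -/
noncomputable def eB (G : SimpleGraph V) (X Y : Set V) : ℕ :=
  Set.ncard {p : V × V | p.1 ∈ X ∧ p.2 ∈ Y ∧ G.Adj p.1 p.2}

/-- The vertex set (in `V`) of a connected component of the induced subgraph on `U`. -/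
def compSupp (G : SimpleGraph V) (U : Set V)
    (C : (G.induce U).ConnectedComponent) : Set V :=
  Subtype.val '' C.supp

/-- `δ(A,B) = 2|A| - 2|B| + ∑_{v ∈ B} d_{G-A}(v) - o(A,B)`, where `o(A,B)` is the
number of components of `G - (A ∪ B)` sending an odd number of edges to `B`. -/
noncomputable def deltaAB (G : SimpleGraph V) (A B : Set V) : ℤ :=
  2 * A.ncard - 2 * B.ncard + eB G B Aᶜ -
    Nat.card {C : (G.induce (A ∪ B)ᶜ).ConnectedComponent //
      Odd (eB G (compSupp G (A ∪ B)ᶜ C) B)}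

/-- A barrier (Tutte pair) of `G`. -/
def IsBarrier (G : SimpleGraph V) (A B : Set V) : Prop :=
  Disjoint A B ∧ deltaAB G A B ≤ -2

/-- A biased barrier: a barrier maximizing `|A|` and, subject to that, minimizing `|B|`. -/
def IsBiasedBarrier (G : SimpleGraph V) (A B : Set V) : Prop :=
  IsBarrier G A B ∧
    ∀ A' B' : Set V, IsBarrier G A' B' →
      A'.ncard ≤ A.ncard ∧ (A'.ncard = A.ncard → B.ncard ≤ B'.ncard)

/-- A `2`-factor is a `2`-regular spanning subgraph. -/
def HasTwoFactor (G : SimpleGraph V) : Prop :=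
  ∃ H : SimpleGraph V, H ≤ G ∧ ∀ v : V, (H.neighborSet v).ncard = 2

/-- The number of components of `G - S`. -/
noncomputable def numComp (G : SimpleGraph V) (S : Set V) : ℕ :=
  Nat.card ((G.induce Sᶜ).ConnectedComponent)

/-- `G` is `t`-tough: every vertex cut `S` satisfies `|S| ≥ t · c(G - S)`. -/
def Tough (t : ℝ) (G : SimpleGraph V) : Prop :=
  ∀ S : Set V, 2 ≤ numComp G S → t * (numComp G S : ℝ) ≤ (S.ncard : ℝ)

/-- The toughness `τ(G) = min_S |S| / c(G - S)` over vertex cuts `S`. -/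
noncomputable def toughness (G : SimpleGraph V) : ℝ :=
  sInf {r : ℝ | ∃ S : Set V, 2 ≤ numComp G S ∧ r = (S.ncard : ℝ) / (numComp G S : ℝ)}

/-- `G` is `k`-connected. -/
def KConnected (k : ℕ) (G : SimpleGraph V) : Prop :=
  k < Nat.card V ∧ ∀ S : Set V, S.ncard < k → (G.induce Sᶜ).Connected

/-- The independence number `α(G)`. -/
noncomputable def indepNum (G : SimpleGraph V) : ℕ :=
  sSup {n : ℕ | ∃ s : Set V, (∀ u ∈ s, ∀ v ∈ s, ¬ G.Adj u v) ∧ s.ncard = n}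

/-- The minimum degree `δ(G)`. -/
noncomputable def minDeg (G : SimpleGraph V) : ℕ :=
  sInf {d : ℕ | ∃ v : V, (G.neighborSet v).ncard = d}

/-- `H` occurs as an induced subgraph of `G`. -/
def IsInducedCopy {W : Type*} (H : SimpleGraph W) (G : SimpleGraph V) : Prop :=
  ∃ f : W ↪ V, ∀ a b : W, G.Adj (f a) (f b) ↔ H.Adj a b

/-- The disjoint union `P_m ∪ k·P_1` of a path on `m` vertices and `k` isolated vertices. -/
def pathUnion (m k : ℕ) : SimpleGraph (Fin m ⊕ Fin k) where
  Adj a b := ∃ i j : Fin m, a = Sum.inl i ∧ b = Sum.inl j ∧ (pathGraph m).Adj i j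
  symm := by constructor; rintro a b ⟨i, j, rfl, rfl, h⟩; exact ⟨j, i, rfl, rfl, h.symm⟩
  loopless := by
    constructor
    rintro a ⟨i, j, rfl, hj, h⟩
    obtain rfl := Sum.inl.inj hj
    exact (pathGraph m).loopless.irrefl i h

/-- The join `G ∨ H` of two graphs. -/
def joinG {α β : Type*} (G : SimpleGraph α) (H : SimpleGraph β) :
    SimpleGraph (α ⊕ β) where
  Adj x y :=
    match x, y with
    | Sum.inl a, Sum.inl b => G.Adj a b
    | Sum.inr a, Sum.inr b => H.Adj a b
    | _, _ => True
  symm := by constructor; rintro (a | a) (b | b) h <;> simp_all <;> exact h.symm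
  loopless := by constructor; rintro (a | a) h <;> simp_all

/-- `a` disjoint copies of the complete graph `K_b`. -/
def cliquesG (a b : ℕ) : SimpleGraph (Fin a × Fin b) where
  Adj p q := p.1 = q.1 ∧ p.2 ≠ q.2
  symm := by constructor; rintro p q ⟨h1, h2⟩; exact ⟨h1.symm, h2.symm⟩
  loopless := by constructor; rintro p ⟨_, h⟩; exact h rfl

/-- The graph `H_n`: `K_n ∨ (K̄_{2n+1} ∪ K_{2n+1})` together with a perfect matching
between the independent part and the clique part. -/
def Hgraph (n : ℕ) :
    SimpleGraph (Fin n ⊕ (Fin (2 * n + 1) ⊕ Fin (2 * n + 1))) where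
  Adj x y := x ≠ y ∧
    match x, y with
    | Sum.inl _, _ => True
    | _, Sum.inl _ => True
    | Sum.inr (Sum.inl _), Sum.inr (Sum.inl _) => False
    | Sum.inr (Sum.inr _), Sum.inr (Sum.inr _) => True
    | Sum.inr (Sum.inl i), Sum.inr (Sum.inr j) => i = j
    | Sum.inr (Sum.inr i), Sum.inr (Sum.inl j) => i = j
  symm := by
    constructor
    rintro (a | a | a) (b | b | b) ⟨hne, h⟩ <;>
      exact ⟨Ne.symm hne, by simp_all⟩
  loopless := by constructor; rintro x ⟨hne, _⟩; exact hne rfl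



section Aux

variable [Fintype V]

private lemma eB_comm (G : SimpleGraph V) (X Y : Set V) : eB G X Y = eB G Y X := by
  unfold eB
  rw [show {p : V × V | p.1 ∈ Y ∧ p.2 ∈ X ∧ G.Adj p.1 p.2}
      = Prod.swap '' {p : V × V | p.1 ∈ X ∧ p.2 ∈ Y ∧ G.Adj p.1 p.2} by
    ext ⟨a, b⟩
    simp only [Set.mem_setOf_eq, Set.mem_image, Prod.exists, Prod.swap_prod_mk,
      Prod.mk.injEq]
    constructor
    · rintro ⟨hb, ha, h⟩; exact ⟨b, a, ⟨ha, hb, h.symm⟩, rfl, rfl⟩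
    · rintro ⟨x, y, ⟨hx, hy, h⟩, rfl, rfl⟩; exact ⟨hy, hx, h.symm⟩]
  rw [Set.ncard_image_of_injective _ Prod.swap_injective]

private lemma eB_union_right (G : SimpleGraph V) (X Y Z : Set V) (h : Disjoint Y Z) :
    eB G X (Y ∪ Z) = eB G X Y + eB G X Z := by
  unfold eB
  rw [show {p : V × V | p.1 ∈ X ∧ p.2 ∈ Y ∪ Z ∧ G.Adj p.1 p.2}
      = {p : V × V | p.1 ∈ X ∧ p.2 ∈ Y ∧ G.Adj p.1 p.2}
        ∪ {p : V × V | p.1 ∈ X ∧ p.2 ∈ Z ∧ G.Adj p.1 p.2} by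
    ext ⟨a, b⟩; simp [Set.mem_union]; tauto]
  exact Set.ncard_union_eq (by
    rw [Set.disjoint_left]
    rintro ⟨a, b⟩ ⟨_, hb, _⟩ ⟨_, hb', _⟩
    exact Set.disjoint_left.mp h hb hb') (Set.toFinite _) (Set.toFinite _)

private lemma ncard_iUnion_eq {ι W : Type*} [Fintype ι] [Fintype W] (f : ι → Set W)
    (hd : Pairwise (Function.onFun Disjoint f)) :
    (⋃ i, f i).ncard = ∑ i, (f i).ncard := by
  classical
  have h1 : (⋃ i, f i).toFinset = Finset.univ.biUnion (fun i => (f i).toFinset) := by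
    ext x; simp
  rw [Set.ncard_eq_toFinset_card', h1, Finset.card_biUnion]
  · exact Finset.sum_congr rfl fun i _ => (Set.ncard_eq_toFinset_card' _).symm
  · intro i _ j _ hij
    exact Set.disjoint_toFinset.mpr (hd hij)

private lemma eB_iUnion {ι : Type*} [Fintype ι] (G : SimpleGraph V) (X : Set V)
    (f : ι → Set V) (hd : Pairwise (Function.onFun Disjoint f)) :
    eB G X (⋃ i, f i) = ∑ i, eB G X (f i) := by
  unfold eB
  rw [show {p : V × V | p.1 ∈ X ∧ p.2 ∈ ⋃ i, f i ∧ G.Adj p.1 p.2}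
      = ⋃ i, {p : V × V | p.1 ∈ X ∧ p.2 ∈ f i ∧ G.Adj p.1 p.2} by
    ext ⟨a, b⟩; simp [Set.mem_iUnion]]
  exact ncard_iUnion_eq _ fun i j hij => by
    rw [Function.onFun, Set.disjoint_left]
    rintro ⟨a, b⟩ ⟨_, hb, _⟩ ⟨_, hb', _⟩
    exact Set.disjoint_left.mp (hd hij) hb hb'

private lemma even_eB_self (G : SimpleGraph V) (B : Set V) : Even (eB G B B) := by
  classical
  letI : LinearOrder V := LinearOrder.lift' (Fintype.equivFin V) (Equiv.injective _)
  set S : Set (V × V) := {p : V × V | p.1 ∈ B ∧ p.2 ∈ B ∧ G.Adj p.1 p.2} with hSdef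
  set T : Set (V × V) := {p ∈ S | p.1 < p.2} with hTdef
  set T' : Set (V × V) := {p ∈ S | p.2 < p.1} with hT'def
  have hS : S = T ∪ T' := by
    ext ⟨a, b⟩
    constructor
    · intro h
      rcases lt_or_gt_of_ne (h.2.2.ne) with hlt | hgt
      · exact Or.inl ⟨h, hlt⟩
      · exact Or.inr ⟨h, hgt⟩
    · rintro (⟨h, _⟩ | ⟨h, _⟩) <;> exact h
  have hT' : T' = Prod.swap '' T := by
    ext ⟨a, b⟩
    simp only [hT'def, hTdef, hSdef, Set.mem_setOf_eq, Set.mem_image, Prod.exists,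
      Prod.swap_prod_mk, Prod.mk.injEq]
    constructor
    · rintro ⟨⟨ha, hb, h⟩, hlt⟩; exact ⟨b, a, ⟨⟨hb, ha, h.symm⟩, hlt⟩, rfl, rfl⟩
    · rintro ⟨x, y, ⟨⟨hx, hy, h⟩, hlt⟩, rfl, rfl⟩; exact ⟨⟨hy, hx, h.symm⟩, hlt⟩
  have hdisj : Disjoint T T' := by
    rw [Set.disjoint_left]
    rintro ⟨a, b⟩ ⟨_, hlt⟩ ⟨_, hgt⟩
    exact absurd hgt (not_lt_of_gt hlt)
  have hcard : T'.ncard = T.ncard := by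
    rw [hT', Set.ncard_image_of_injective _ Prod.swap_injective]
  have : eB G B B = T.ncard + T.ncard := by
    unfold eB
    rw [← hSdef, hS, Set.ncard_union_eq hdisj (Set.toFinite _) (Set.toFinite _), hcard]
  rw [this]
  exact ⟨T.ncard, rfl⟩

private lemma iUnion_compSupp (G : SimpleGraph V) (U : Set V) :
    (⋃ C : (G.induce U).ConnectedComponent, compSupp G U C) = U := by
  ext v
  simp only [Set.mem_iUnion, compSupp, Set.mem_image]
  constructor
  · rintro ⟨C, x, _, rfl⟩; exact x.2
  · intro hv
    exact ⟨(G.induce U).connectedComponentMk ⟨v, hv⟩, ⟨v, hv⟩, rfl, rfl⟩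

private lemma compSupp_pairwise_disjoint (G : SimpleGraph V) (U : Set V) :
    Pairwise (Function.onFun Disjoint (compSupp G U)) := by
  intro C D hCD
  rw [Function.onFun, Set.disjoint_left]
  rintro v ⟨x, hx, rfl⟩ ⟨y, hy, hyx⟩
  obtain rfl : y = x := Subtype.val_injective hyx
  rw [ConnectedComponent.mem_supp_iff] at hx hy
  exact hCD (hx ▸ hy ▸ rfl)

end Aux

theorem stmt3 {V : Type*} [Fintype V] (G : SimpleGraph V) (A B : Set V)
    (hAB : Disjoint A B) :
    Even (deltaAB G A B) := by
  classical
  set U : Set V := (A ∪ B)ᶜ with hU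
  haveI : Fintype ((G.induce U).ConnectedComponent) := Fintype.ofFinite _
  set o : ℕ := Nat.card {C : (G.induce (A ∪ B)ᶜ).ConnectedComponent //
      Odd (eB G (compSupp G (A ∪ B)ᶜ C) B)} with ho
  have hAc : Aᶜ = B ∪ U := by
    ext v
    simp only [Set.mem_compl_iff, Set.mem_union, hU]
    constructor
    · intro hv
      by_cases hvB : v ∈ B
      · exact Or.inl hvB
      · exact Or.inr (by simp [hv, hvB])
    · rintro (hv | hv)
      · exact fun hA => Set.disjoint_left.mp hAB hA hv
      · exact fun hA => hv (Or.inl hA)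
  have hBU : Disjoint B U := by
    rw [Set.disjoint_left]
    intro v hvB hvU
    exact hvU (Or.inr hvB)
  have hsplit : eB G B Aᶜ = eB G B B + eB G B U := by
    rw [hAc, eB_union_right G B B U hBU]
  have hcomp : eB G B U = ∑ C : (G.induce U).ConnectedComponent,
      eB G (compSupp G U C) B := by
    conv_lhs => rw [← iUnion_compSupp G U]
    rw [eB_iUnion G B _ (compSupp_pairwise_disjoint G U)]
    exact Finset.sum_congr rfl fun C _ => eB_comm G B _
  have hoeq : o = (Finset.univ.filter
      (fun C : (G.induce U).ConnectedComponent =>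
        Odd (eB G (compSupp G U C) B))).card := by
    rw [ho, Nat.card_eq_fintype_card, Fintype.card_subtype]
  have hkey : Even (eB G B Aᶜ) ↔ Even o := by
    rw [hsplit, Nat.even_add, hcomp]
    simp only [even_eB_self G B, true_iff]
    rw [Finset.even_sum_iff_even_card_odd, hoeq]
  have hform : deltaAB G A B =
      (2 * (A.ncard : ℤ) - 2 * (B.ncard : ℤ)) + ((eB G B Aᶜ : ℤ) - (o : ℤ)) := by
    unfold deltaAB
    rw [← ho]
    ring
  rw [hform]
  refine Even.add ⟨(A.ncard : ℤ) - (B.ncard : ℤ), by ring⟩ ?_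
  rw [Int.even_sub]
  simpa [Int.even_coe_nat] using hkey
end

section
/- For a positive integer n, let H_n be the graph obtained from K_n ∨ (complement of K_{2n+1} ∪ K_{2n+1}) by adding a perfect matching between the 2n+1 vertices of the empty part and the 2n+1 vertices of the clique K_{2n+1}. Then the independence number of H_n is 2n+1 and the minimum degree of H_n is n+1. -/
open SimpleGraph

variable {V : Type*}

open Sum

lemma indep_bound (n : ℕ) (s : Set (Fin n ⊕ (Fin (2*n+1) ⊕ Fin (2*n+1))))
    (hs : ∀ u ∈ s, ∀ v ∈ s, ¬ (Hgraph n).Adj u v) : s.ncard ≤ 2*n+1 := by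
  by_cases h : ∃ a, Sum.inl a ∈ s
  · obtain ⟨a, ha⟩ := h
    have hsub : s ⊆ {Sum.inl a} := by
      intro w hw
      by_contra hne
      simp only [Set.mem_singleton_iff] at hne
      refine hs _ ha _ hw ?_
      rcases w with b | (i | i) <;> simp_all [Hgraph]
      exact fun hb => hne (by rw [hb])
    calc s.ncard ≤ ({Sum.inl a} : Set _).ncard :=
          Set.ncard_le_ncard hsub (Set.finite_singleton _)
      _ = 1 := Set.ncard_singleton _
      _ ≤ 2*n+1 := by omega
  · push_neg at h
    set f : (Fin n ⊕ (Fin (2*n+1) ⊕ Fin (2*n+1))) → Fin (2*n+1) :=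
      Sum.elim (fun _ => ⟨0, by omega⟩) (Sum.elim id id) with hf
    have hinj : Set.InjOn f s := by
      intro u hu v hv huv
      rcases u with a | (i | i)
      · exact absurd hu (h a)
      all_goals rcases v with b | (j | j)
      · exact absurd hv (h b)
      · simp only [hf, Sum.elim_inr, Sum.elim_inl, id] at huv
        subst huv; rfl
      · simp only [hf, Sum.elim_inr, Sum.elim_inl, Sum.elim_inr, id] at huv
        subst huv
        exact absurd (by simp [Hgraph] : (Hgraph n).Adj (inr (inl i)) (inr (inr i)))
          (hs _ hu _ hv)
      · exact absurd hv (h b)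
      · simp only [hf, Sum.elim_inr, Sum.elim_inl, id] at huv
        subst huv
        exact absurd (by simp [Hgraph] : (Hgraph n).Adj (inr (inr i)) (inr (inl i)))
          (hs _ hu _ hv)
      · simp only [hf, Sum.elim_inr, id] at huv
        subst huv; rfl
    calc s.ncard = (f '' s).ncard := (Set.ncard_image_of_injOn hinj).symm
      _ ≤ (Set.univ : Set (Fin (2*n+1))).ncard :=
          Set.ncard_le_ncard (Set.subset_univ _) Set.finite_univ
      _ = 2*n+1 := by simp [Set.ncard_univ]

lemma deg_mid (n : ℕ) (i : Fin (2*n+1)) :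
    ((Hgraph n).neighborSet (inr (inl i))).ncard = n+1 := by
  have hset : (Hgraph n).neighborSet (inr (inl i)) =
      (Sum.inl '' Set.univ) ∪ {inr (inr i)} := by
    ext v
    rcases v with b | (j | j) <;> simp [Hgraph, SimpleGraph.mem_neighborSet, eq_comm]
  rw [hset, Set.ncard_union_eq (by simp) (Set.toFinite _) (Set.toFinite _),
    Set.ncard_image_of_injective _ Sum.inl_injective, Set.ncard_singleton,
    Set.ncard_univ]
  simp

lemma deg_lb (n : ℕ) (v : Fin n ⊕ (Fin (2*n+1) ⊕ Fin (2*n+1))) :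
    n+1 ≤ ((Hgraph n).neighborSet v).ncard := by
  rcases v with a | (i | i)
  · have hsub : ((fun j : Fin (2*n+1) => (inr (inl j) : Fin n ⊕ (Fin (2*n+1) ⊕ Fin (2*n+1)))) ''
        Set.univ) ⊆ (Hgraph n).neighborSet (inl a) := by
      rintro _ ⟨j, -, rfl⟩
      simp [Hgraph, SimpleGraph.mem_neighborSet]
    have := Set.ncard_le_ncard hsub (Set.toFinite _)
    rw [Set.ncard_image_of_injective _ (fun x y hxy => by simpa using hxy),
      Set.ncard_univ, Nat.card_eq_fintype_card, Fintype.card_fin] at this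
    omega
  · rw [deg_mid]
  · have hsub : ((Sum.inl '' Set.univ) ∪ {inr (inl i)}) ⊆
        (Hgraph n).neighborSet (inr (inr i)) := by
      rintro v (⟨b, -, rfl⟩ | hv)
      · simp [Hgraph, SimpleGraph.mem_neighborSet]
      · simp only [Set.mem_singleton_iff] at hv
        subst hv
        simp [Hgraph, SimpleGraph.mem_neighborSet]
    have := Set.ncard_le_ncard hsub (Set.toFinite _)
    rwa [Set.ncard_union_eq (by simp) (Set.toFinite _) (Set.toFinite _),
      Set.ncard_image_of_injective _ Sum.inl_injective, Set.ncard_singleton,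
      Set.ncard_univ, Nat.card_eq_fintype_card, Fintype.card_fin] at this

theorem stmt18 (n : ℕ) (hn : 1 ≤ n) :
    _root_.indepNum (Hgraph n) = 2 * n + 1 ∧ minDeg (Hgraph n) = n + 1 := by
  constructor
  · have hmem : 2*n+1 ∈ {m : ℕ | ∃ s : Set (Fin n ⊕ (Fin (2*n+1) ⊕ Fin (2*n+1))), (∀ u ∈ s, ∀ v ∈ s, ¬ (Hgraph n).Adj u v) ∧
        s.ncard = m} := by
      refine ⟨Set.range (fun j : Fin (2*n+1) => inr (inl j)), ?_, ?_⟩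
      · rintro _ ⟨i, rfl⟩ _ ⟨j, rfl⟩
        simp [Hgraph]
      · rw [← Set.image_univ, Set.ncard_image_of_injective _
          (fun x y hxy => by simpa using hxy), Set.ncard_univ,
          Nat.card_eq_fintype_card, Fintype.card_fin]
    have hbdd : BddAbove {m : ℕ | ∃ s : Set (Fin n ⊕ (Fin (2*n+1) ⊕ Fin (2*n+1))), (∀ u ∈ s, ∀ v ∈ s, ¬ (Hgraph n).Adj u v) ∧
        s.ncard = m} := by
      refine ⟨2*n+1, ?_⟩
      rintro m ⟨s, hs, rfl⟩
      exact indep_bound n s hs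
    refine le_antisymm (csSup_le ⟨_, hmem⟩ ?_) (le_csSup hbdd hmem)
    rintro m ⟨s, hs, rfl⟩
    exact indep_bound n s hs
  · have hmem : n+1 ∈ {d : ℕ | ∃ v, ((Hgraph n).neighborSet v).ncard = d} :=
      ⟨inr (inl ⟨0, by omega⟩), deg_mid n _⟩
    refine le_antisymm (Nat.sInf_le hmem) (le_csInf ⟨_, hmem⟩ ?_)
    rintro d ⟨v, rfl⟩
    exact deg_lb n v
end
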